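/- Let d = 1, let L ≥ 1 be the number of users with user ℓ contributing m_ℓ ≥ 1 samples, let U > 0 and ε > 0, and let T be the ⌈2/ε⌉-th largest value of the multiset {U·m_1, …, U·m_L} (with T := 0 if ⌈2/ε⌉ > L). Then the clipping strategy defined by a_j^{(ℓ)} := max{(U·m_ℓ − T)/(2 m_ℓ), 0} and b_j^{(ℓ)} := min{(U·m_ℓ + T)/(2 m_ℓ), U} for all ℓ ∈ [L], j ∈ [m_ℓ] is admissible (i.e., 0 ≤ a_j^{(ℓ)} ≤ b_j^{(ℓ)} ≤ U) and minimizes the worst-case error functional E^{(1)} over all admissible clipping strategies: for every admissible family {a_j^{(ℓ)}, b_j^{(ℓ)}}, E^{(1)}({a_j^{(ℓ)}, b_j^{(ℓ)}}) is at least the value of E^{(1)} at this strategy. -/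

import Mathlib

open Finset

noncomputable def kthLargest {L : ℕ} (v : Fin L → ℝ) (k : ℕ) : ℝ :=
  (((Finset.univ.val.map v).sort (· ≤ ·)).reverse).getD (k - 1) 0

/-- An admissible clipping strategy: `0 ≤ a ℓ j ≤ b ℓ j ≤ U` for every user `ℓ`
and sample index `j`. -/
def Admissible {L : ℕ} (m : Fin L → ℕ) (U : ℝ)
    (a b : (ℓ : Fin L) → Fin (m ℓ) → ℝ) : Prop :=
  ∀ ℓ j, 0 ≤ a ℓ j ∧ a ℓ j ≤ b ℓ j ∧ b ℓ j ≤ U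

/-- The worst-case error functional `E^(1)` of a clipping strategy (dimension `d = 1`). -/
noncomputable def E1 {L : ℕ} (m : Fin L → ℕ) (U ε : ℝ)
    (a b : (ℓ : Fin L) → Fin (m ℓ) → ℝ) : ℝ :=
  (1 / ∑ ℓ, (m ℓ : ℝ)) *
    ((∑ ℓ, ∑ j, max (a ℓ j) (U - b ℓ j)) +
      (1 / ε) * sSup (Set.range fun ℓ => ∑ j, (b ℓ j - a ℓ j)))

section aux

lemma countA (l : List ℝ) (h : l.Pairwise (· ≤ ·)) (i : ℕ) (hi : i < l.length) :
    l.countP (fun x => decide (l[i] < x)) ≤ l.length - 1 - i := by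
  have hsplit := List.take_append_drop (i+1) l
  have h1 : (l.take (i+1)).countP (fun x => decide (l[i] < x)) = 0 := by
    rw [List.countP_eq_zero]
    intro a ha
    obtain ⟨j, hj, rfl⟩ := List.mem_iff_getElem.1 ha
    have hj' : j < i + 1 := by simp at hj; omega
    rw [List.getElem_take]
    simp only [decide_eq_true_eq, not_lt]
    rcases Nat.lt_or_ge j i with hji | hji
    · exact List.pairwise_iff_getElem.1 h j i _ _ hji
    · have : j = i := by omega
      subst this; exact le_refl _
  have h2 : (l.drop (i+1)).countP (fun x => decide (l[i] < x)) ≤ l.length - 1 - i := by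
    calc (l.drop (i+1)).countP (fun x => decide (l[i] < x)) ≤ (l.drop (i+1)).length :=
        List.countP_le_length
      _ = l.length - 1 - i := by simp; omega
  calc l.countP (fun x => decide (l[i] < x))
      = (l.take (i+1) ++ l.drop (i+1)).countP (fun x => decide (l[i] < x)) := by rw [hsplit]
    _ = _ + _ := List.countP_append
    _ ≤ l.length - 1 - i := by rw [h1]; simpa using h2

lemma countB (l : List ℝ) (h : l.Pairwise (· ≤ ·)) (i : ℕ) (hi : i < l.length) :
    l.length - i ≤ l.countP (fun x => decide (l[i] ≤ x)) := by
  have hsplit := List.take_append_drop i l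
  have h2 : (l.drop i).countP (fun x => decide (l[i] ≤ x)) = (l.drop i).length := by
    rw [List.countP_eq_length]
    intro a ha
    obtain ⟨j, hj, rfl⟩ := List.mem_iff_getElem.1 ha
    rw [List.getElem_drop]
    simp only [decide_eq_true_eq]
    rcases Nat.eq_zero_or_pos j with hj0 | hj0
    · subst hj0; simp
    · exact List.pairwise_iff_getElem.1 h i (i+j) _ _ (by omega)
  calc l.length - i = (l.drop i).length := by simp
    _ = (l.drop i).countP (fun x => decide (l[i] ≤ x)) := h2.symm
    _ ≤ (l.take i).countP _ + (l.drop i).countP _ := Nat.le_add_left _ _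
    _ = (l.take i ++ l.drop i).countP (fun x => decide (l[i] ≤ x)) := List.countP_append.symm
    _ = l.countP (fun x => decide (l[i] ≤ x)) := by rw [hsplit]

lemma card_filter_eq_countP {L : ℕ} (v : Fin L → ℝ) (p : ℝ → Prop) [DecidablePred p] :
    (univ.filter (fun ℓ => p (v ℓ))).card
      = ((univ.val.map v).sort (· ≤ ·)).countP (fun x => decide (p x)) := by
  have h1 : (univ.filter (fun ℓ => p (v ℓ))).card
      = Multiset.countP (fun x => p (v x)) (univ.val : Multiset (Fin L)) := by
    rw [Finset.card_def, Finset.filter_val, Multiset.countP_eq_card_filter]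
  have h2 : Multiset.countP p (univ.val.map v) = Multiset.countP (fun x => p (v x)) univ.val := by
    rw [Multiset.countP_map, Multiset.countP_eq_card_filter]
  have h3 : Multiset.countP p (((univ.val.map v).sort (· ≤ ·)) : Multiset ℝ)
      = Multiset.countP p (univ.val.map v) := by rw [Multiset.sort_eq]
  rw [h1, ← h2, ← h3, Multiset.coe_countP]

lemma kthLargest_eq {L : ℕ} (v : Fin L → ℝ) (k : ℕ) (hk : 1 ≤ k) (hkL : k ≤ L) :
    kthLargest v k = ((univ.val.map v).sort (· ≤ ·))[L - k]'(by
      simp [Multiset.length_sort]; omega) := by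
  set l := (univ.val.map v).sort (· ≤ ·) with hl
  have hlen : l.length = L := by simp [hl, Multiset.length_sort]
  have h1 : k - 1 < l.reverse.length := by simp [hlen]; omega
  rw [kthLargest, List.getD_eq_getElem _ _ h1, List.getElem_reverse]
  congr 1
  simp [hlen]; omega

lemma kthLargest_zero {L : ℕ} (v : Fin L → ℝ) (k : ℕ) (hkL : L < k) :
    kthLargest v k = 0 := by
  apply List.getD_eq_default
  simp [Multiset.length_sort]; omega

lemma kthLargest_mem {L : ℕ} (v : Fin L → ℝ) (k : ℕ) (hk : 1 ≤ k) (hkL : k ≤ L) :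
    ∃ ℓ : Fin L, v ℓ = kthLargest v k := by
  rw [kthLargest_eq v k hk hkL]
  set l := (univ.val.map v).sort (· ≤ ·) with hl
  have hmem : l[L - k]'(by simp [hl, Multiset.length_sort]; omega) ∈ l := List.getElem_mem _
  have hmem2 : l[L - k]'(by simp [hl, Multiset.length_sort]; omega)
      ∈ (univ.val.map v : Multiset ℝ) := by
    exact (Multiset.mem_sort _).1 hmem
  obtain ⟨ℓ, _, hℓ⟩ := Multiset.mem_map.1 hmem2
  exact ⟨ℓ, hℓ⟩

lemma kthLargest_card_gt {L : ℕ} (v : Fin L → ℝ) (k : ℕ) (hk : 1 ≤ k) (hkL : k ≤ L) :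
    (univ.filter (fun ℓ => kthLargest v k < v ℓ)).card ≤ k - 1 := by
  set l := (univ.val.map v).sort (· ≤ ·) with hl
  have hlen : l.length = L := by simp [hl, Multiset.length_sort]
  have hi : L - k < l.length := by omega
  rw [kthLargest_eq v k hk hkL, card_filter_eq_countP]
  have := countA l (Multiset.pairwise_sort _ _) (L - k) hi
  calc l.countP (fun x => decide (l[L-k]'hi < x)) ≤ l.length - 1 - (L - k) := this
    _ = k - 1 := by omega

lemma kthLargest_card_ge {L : ℕ} (v : Fin L → ℝ) (k : ℕ) (hk : 1 ≤ k) (hkL : k ≤ L) :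
    k ≤ (univ.filter (fun ℓ => kthLargest v k ≤ v ℓ)).card := by
  set l := (univ.val.map v).sort (· ≤ ·) with hl
  have hlen : l.length = L := by simp [hl, Multiset.length_sort]
  have hi : L - k < l.length := by omega
  rw [kthLargest_eq v k hk hkL, card_filter_eq_countP]
  have := countB l (Multiset.pairwise_sort _ _) (L - k) hi
  calc k = l.length - (L - k) := by omega
    _ ≤ l.countP (fun x => decide (l[L-k]'hi ≤ x)) := this

lemma half_le_max (x y : ℝ) : (x + y) / 2 ≤ max x y := by
  rcases le_total x y with h | h
  · rw [max_eq_right h]; linarith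
  · rw [max_eq_left h]; linarith

lemma strat_facts (U T c : ℝ) (hU : 0 < U) (hT : 0 ≤ T) (hc : 0 < c) :
    U - min ((U*c + T)/(2*c)) U = max ((U*c - T)/(2*c)) 0 ∧
    c * max ((U*c - T)/(2*c)) 0 = (U*c - min T (U*c))/2 ∧
    c * (min ((U*c + T)/(2*c)) U - max ((U*c - T)/(2*c)) 0) = min T (U*c) ∧
    max ((U*c - T)/(2*c)) 0 ≤ min ((U*c + T)/(2*c)) U ∧
    min ((U*c + T)/(2*c)) U ≤ U := by
  rcases le_total T (U*c) with hTv | hTv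
  · have ha : max ((U*c - T)/(2*c)) 0 = (U*c - T)/(2*c) :=
      max_eq_left (by apply div_nonneg (by linarith) (by linarith))
    have hb : min ((U*c + T)/(2*c)) U = (U*c + T)/(2*c) :=
      min_eq_left (by rw [div_le_iff₀ (by linarith)]; nlinarith)
    have hmin : min T (U*c) = T := min_eq_left hTv
    refine ⟨?_, ?_, ?_, ?_, ?_⟩
    · rw [ha, hb]; field_simp; ring
    · rw [ha, hmin]; field_simp
    · rw [ha, hb, hmin]; field_simp; ring
    · rw [ha, hb]; gcongr <;> linarith
    · rw [hb]; rw [div_le_iff₀ (by linarith)]; nlinarith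
  · have ha : max ((U*c - T)/(2*c)) 0 = 0 :=
      max_eq_right (by apply div_nonpos_of_nonpos_of_nonneg (by linarith) (by linarith))
    have hb : min ((U*c + T)/(2*c)) U = U :=
      min_eq_right (by rw [le_div_iff₀ (by linarith)]; nlinarith)
    have hmin : min T (U*c) = U*c := min_eq_right hTv
    refine ⟨?_, ?_, ?_, ?_, ?_⟩
    · rw [ha, hb]; ring
    · rw [ha, hmin]; ring
    · rw [ha, hb, hmin]; ring
    · rw [ha, hb]; exact le_of_lt hU
    · rw [hb]

end aux

/-- Theorem 2 of the paper, case `d = 1`.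
With `T` the `⌈2/ε⌉`-th largest value of `{U·m_1, …, U·m_L}` (and `T = 0` if `⌈2/ε⌉ > L`),
the strategy `a_j^{(ℓ)} = max{(U m_ℓ − T)/(2 m_ℓ), 0}`, `b_j^{(ℓ)} = min{(U m_ℓ + T)/(2 m_ℓ), U}`
is admissible and minimizes `E^(1)` over all admissible clipping strategies. -/

theorem stmt0 {L : ℕ} (hL : 0 < L) (m : Fin L → ℕ) (hm : ∀ ℓ, 1 ≤ m ℓ)
    (U ε : ℝ) (hU : 0 < U) (hε : 0 < ε)
    (T : ℝ) (hT : T = kthLargest (fun ℓ => U * (m ℓ : ℝ)) ⌈(2 : ℝ) / ε⌉₊) :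
    Admissible m U (fun ℓ _ => max ((U * (m ℓ : ℝ) - T) / (2 * (m ℓ : ℝ))) 0)
      (fun ℓ _ => min ((U * (m ℓ : ℝ) + T) / (2 * (m ℓ : ℝ))) U) ∧
    ∀ a b, Admissible m U a b →
      E1 m U ε (fun ℓ _ => max ((U * (m ℓ : ℝ) - T) / (2 * (m ℓ : ℝ))) 0)
        (fun ℓ _ => min ((U * (m ℓ : ℝ) + T) / (2 * (m ℓ : ℝ))) U) ≤ E1 m U ε a b := by
  have hNL : Nonempty (Fin L) := ⟨⟨0, hL⟩⟩
  set k := ⌈(2:ℝ)/ε⌉₊ with hkdef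
  have hk1 : 1 ≤ k := Nat.ceil_pos.2 (by positivity)
  have hc : ∀ ℓ, (0:ℝ) < (m ℓ : ℝ) := fun ℓ => by
    exact_mod_cast Nat.lt_of_lt_of_le Nat.zero_lt_one (hm ℓ)
  have hvpos : ∀ ℓ, 0 < U * (m ℓ : ℝ) := fun ℓ => mul_pos hU (hc ℓ)
  have hTnn : 0 ≤ T := by
    rcases le_or_gt k L with hkL | hkL
    · obtain ⟨ℓ0, h0⟩ := kthLargest_mem (fun ℓ => U * (m ℓ : ℝ)) k hk1 hkL
      rw [hT, ← h0]
      exact le_of_lt (hvpos ℓ0)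
    · rw [hT, kthLargest_zero _ _ hkL]
  -- achievement of T as a min value
  have hach : ∃ ℓ0, min T (U * (m ℓ0 : ℝ)) = T := by
    rcases le_or_gt k L with hkL | hkL
    · obtain ⟨ℓ0, h0⟩ := kthLargest_mem (fun ℓ => U * (m ℓ : ℝ)) k hk1 hkL
      exact ⟨ℓ0, by rw [← hT] at h0; rw [h0, min_self]⟩
    · have hT0 : T = 0 := by rw [hT, kthLargest_zero _ _ hkL]
      exact ⟨⟨0, hL⟩, by rw [hT0]; exact min_eq_left (le_of_lt (hvpos _))⟩
  -- the key comparison inequality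
  have key : ∀ S : ℝ, 0 ≤ S →
      (T - S) * (2/ε) ≤ (∑ ℓ, min T (U * (m ℓ : ℝ))) - ∑ ℓ, min S (U * (m ℓ : ℝ)) := by
    intro S hS
    have hsub : (∑ ℓ, min T (U * (m ℓ : ℝ))) - ∑ ℓ, min S (U * (m ℓ : ℝ))
        = ∑ ℓ, (min T (U * (m ℓ : ℝ)) - min S (U * (m ℓ : ℝ))) := by
      rw [Finset.sum_sub_distrib]
    rcases le_total T S with hTS | hTS
    · -- S ≥ T
      have hub : ((univ.filter (fun ℓ => T < U * (m ℓ : ℝ))).card : ℝ) ≤ (k:ℝ) - 1 := by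
        rcases le_or_gt k L with hkL | hkL
        · have := kthLargest_card_gt (fun ℓ => U * (m ℓ : ℝ)) k hk1 hkL
          rw [← hT] at this
          have h2 : ((univ.filter (fun ℓ => T < U * (m ℓ : ℝ))).card : ℝ) ≤ ((k - 1 : ℕ) : ℝ) := by
            exact_mod_cast this
          rwa [Nat.cast_sub hk1, Nat.cast_one] at h2
        · have h1 : (univ.filter (fun ℓ => T < U * (m ℓ : ℝ))).card ≤ L := by
            calc (univ.filter (fun ℓ => T < U * (m ℓ : ℝ))).card ≤ univ.card :=
                Finset.card_filter_le _ _
              _ = L := by simp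
          have h2 : (univ.filter (fun ℓ => T < U * (m ℓ : ℝ))).card ≤ k - 1 := by omega
          have h3 : ((univ.filter (fun ℓ => T < U * (m ℓ : ℝ))).card : ℝ) ≤ ((k - 1 : ℕ) : ℝ) := by
            exact_mod_cast h2
          rwa [Nat.cast_sub hk1, Nat.cast_one] at h3
      have hk2 : (k:ℝ) - 1 < 2/ε := by
        have := Nat.ceil_lt_add_one (show (0:ℝ) ≤ 2/ε by positivity)
        rw [← hkdef] at this
        linarith
      have pt : ∀ ℓ ∈ univ, min S (U * (m ℓ : ℝ)) - min T (U * (m ℓ : ℝ))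
          ≤ if T < U * (m ℓ : ℝ) then S - T else 0 := by
        intro ℓ _
        split_ifs with h
        · have h1 : min T (U * (m ℓ : ℝ)) = T := min_eq_left (le_of_lt h)
          have h2 : min S (U * (m ℓ : ℝ)) ≤ S := min_le_left _ _
          linarith
        · push_neg at h
          rw [min_eq_right h, min_eq_right (h.trans hTS)]
          linarith
      have hsum1 : ∑ ℓ, (min S (U * (m ℓ : ℝ)) - min T (U * (m ℓ : ℝ)))
          ≤ ((univ.filter (fun ℓ => T < U * (m ℓ : ℝ))).card : ℝ) * (S - T) := by
        calc ∑ ℓ, (min S (U * (m ℓ : ℝ)) - min T (U * (m ℓ : ℝ)))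
            ≤ ∑ ℓ, (if T < U * (m ℓ : ℝ) then S - T else 0) := Finset.sum_le_sum pt
          _ = ((univ.filter (fun ℓ => T < U * (m ℓ : ℝ))).card : ℝ) * (S - T) := by
              rw [Finset.sum_ite, Finset.sum_const, Finset.sum_const_zero, add_zero,
                nsmul_eq_mul]
      have hsum2 : ∑ ℓ, (min S (U * (m ℓ : ℝ)) - min T (U * (m ℓ : ℝ)))
          ≤ (2/ε) * (S - T) := by
        calc ∑ ℓ, (min S (U * (m ℓ : ℝ)) - min T (U * (m ℓ : ℝ)))
            ≤ ((univ.filter (fun ℓ => T < U * (m ℓ : ℝ))).card : ℝ) * (S - T) := hsum1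
          _ ≤ ((k:ℝ) - 1) * (S - T) := mul_le_mul_of_nonneg_right hub (by linarith)
          _ ≤ (2/ε) * (S - T) := mul_le_mul_of_nonneg_right (le_of_lt hk2) (by linarith)
      have hsub2 : ∑ ℓ, (min S (U * (m ℓ : ℝ)) - min T (U * (m ℓ : ℝ)))
          = (∑ ℓ, min S (U * (m ℓ : ℝ))) - ∑ ℓ, min T (U * (m ℓ : ℝ)) := by
        rw [Finset.sum_sub_distrib]
      rw [hsub2] at hsum2
      nlinarith [hsum2]
    · -- S ≤ T
      rcases le_or_gt k L with hkL | hkL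
      · have hge : (k:ℝ) ≤ ((univ.filter (fun ℓ => T ≤ U * (m ℓ : ℝ))).card : ℝ) := by
          have := kthLargest_card_ge (fun ℓ => U * (m ℓ : ℝ)) k hk1 hkL
          rw [← hT] at this
          exact_mod_cast this
        have hk2 : 2/ε ≤ (k:ℝ) := Nat.le_ceil _
        have pt : ∀ ℓ ∈ univ, (if T ≤ U * (m ℓ : ℝ) then T - S else 0)
            ≤ min T (U * (m ℓ : ℝ)) - min S (U * (m ℓ : ℝ)) := by
          intro ℓ _
          split_ifs with h
          · rw [min_eq_left h, min_eq_left (hTS.trans h)]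
          · have := min_le_min hTS (le_refl (U * (m ℓ : ℝ)))
            linarith
        have hsum1 : ((univ.filter (fun ℓ => T ≤ U * (m ℓ : ℝ))).card : ℝ) * (T - S)
            ≤ ∑ ℓ, (min T (U * (m ℓ : ℝ)) - min S (U * (m ℓ : ℝ))) := by
          calc ((univ.filter (fun ℓ => T ≤ U * (m ℓ : ℝ))).card : ℝ) * (T - S)
              = ∑ ℓ, (if T ≤ U * (m ℓ : ℝ) then T - S else 0) := by
                rw [Finset.sum_ite, Finset.sum_const, Finset.sum_const_zero, add_zero,
                  nsmul_eq_mul]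
            _ ≤ ∑ ℓ, (min T (U * (m ℓ : ℝ)) - min S (U * (m ℓ : ℝ))) := Finset.sum_le_sum pt
        rw [hsub]
        have hchain : (k:ℝ) * (T - S) ≤ ∑ ℓ, (min T (U * (m ℓ : ℝ)) - min S (U * (m ℓ : ℝ))) := by
          calc (k:ℝ) * (T - S)
              ≤ ((univ.filter (fun ℓ => T ≤ U * (m ℓ : ℝ))).card : ℝ) * (T - S) :=
                mul_le_mul_of_nonneg_right hge (by linarith)
            _ ≤ _ := hsum1
        nlinarith [hchain]
      · have hT0 : T = 0 := by rw [hT, kthLargest_zero _ _ hkL]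
        have hS0 : S = 0 := le_antisymm (hT0 ▸ hTS) hS
        rw [hT0, hS0]
        norm_num
  -- per-user facts for the candidate strategy
  have hM : 0 < ∑ ℓ, (m ℓ : ℝ) := Finset.sum_pos (fun ℓ _ => hc ℓ) ⟨⟨0, hL⟩, Finset.mem_univ _⟩
  constructor
  · intro ℓ j
    obtain ⟨h1, h2, h3, h4, h5⟩ := strat_facts U T (m ℓ : ℝ) hU hTnn (hc ℓ)
    exact ⟨le_max_right _ _, h4, h5⟩
  · intro a b hab
    rw [E1, E1]
    apply mul_le_mul_of_nonneg_left _ (by positivity)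
    -- LHS computation
    have hin : ∀ ℓ, (∑ _j : Fin (m ℓ), max (max ((U * (m ℓ : ℝ) - T) / (2 * (m ℓ : ℝ))) 0)
        (U - min ((U * (m ℓ : ℝ) + T) / (2 * (m ℓ : ℝ))) U))
        = (U * (m ℓ : ℝ) - min T (U * (m ℓ : ℝ))) / 2 := by
      intro ℓ
      obtain ⟨h1, h2, h3, h4, h5⟩ := strat_facts U T (m ℓ : ℝ) hU hTnn (hc ℓ)
      rw [Finset.sum_const, Finset.card_univ, Fintype.card_fin, nsmul_eq_mul]
      rw [h1, max_self]
      exact h2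
    have hval : ∀ ℓ, (∑ _j : Fin (m ℓ), (min ((U * (m ℓ : ℝ) + T) / (2 * (m ℓ : ℝ))) U
        - max ((U * (m ℓ : ℝ) - T) / (2 * (m ℓ : ℝ))) 0)) = min T (U * (m ℓ : ℝ)) := by
      intro ℓ
      obtain ⟨h1, h2, h3, h4, h5⟩ := strat_facts U T (m ℓ : ℝ) hU hTnn (hc ℓ)
      rw [Finset.sum_const, Finset.card_univ, Fintype.card_fin, nsmul_eq_mul]
      exact h3
    have hsup1 : sSup (Set.range fun ℓ => (∑ _j : Fin (m ℓ),
        (min ((U * (m ℓ : ℝ) + T) / (2 * (m ℓ : ℝ))) U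
          - max ((U * (m ℓ : ℝ) - T) / (2 * (m ℓ : ℝ))) 0))) = T := by
      have hfe : (fun ℓ => (∑ _j : Fin (m ℓ),
          (min ((U * (m ℓ : ℝ) + T) / (2 * (m ℓ : ℝ))) U
            - max ((U * (m ℓ : ℝ) - T) / (2 * (m ℓ : ℝ))) 0)))
          = fun ℓ => min T (U * (m ℓ : ℝ)) := funext hval
      rw [hfe]
      apply le_antisymm
      · exact csSup_le (Set.range_nonempty _) (by rintro x ⟨ℓ, rfl⟩; exact min_le_left _ _)
      · obtain ⟨ℓ0, h0⟩ := hach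
        exact le_csSup (Set.finite_range _).bddAbove ⟨ℓ0, h0⟩
    -- RHS lower bounds
    set S := sSup (Set.range fun ℓ => ∑ j, (b ℓ j - a ℓ j)) with hSdef
    have hSl : ∀ ℓ, (∑ j, (b ℓ j - a ℓ j)) ≤ S := fun ℓ =>
      le_csSup (Set.finite_range _).bddAbove ⟨ℓ, rfl⟩
    have hS0 : 0 ≤ S := by
      refine le_trans (Finset.sum_nonneg fun j _ => sub_nonneg.2 (hab ⟨0, hL⟩ j).2.1)
        (hSl ⟨0, hL⟩)
    have hSv : ∀ ℓ, (∑ j, (b ℓ j - a ℓ j)) ≤ U * (m ℓ : ℝ) := by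
      intro ℓ
      calc (∑ j, (b ℓ j - a ℓ j)) ≤ ∑ _j : Fin (m ℓ), U := by
            apply Finset.sum_le_sum
            intro j _
            have h := hab ℓ j
            linarith [h.1, h.2.2]
        _ = U * (m ℓ : ℝ) := by
            rw [Finset.sum_const, Finset.card_univ, Fintype.card_fin, nsmul_eq_mul, mul_comm]
    have hA : ∀ ℓ ∈ univ, (U * (m ℓ : ℝ) - min S (U * (m ℓ : ℝ))) / 2
        ≤ ∑ j, max (a ℓ j) (U - b ℓ j) := by
      intro ℓ _
      have step1 : (∑ j, (U - (b ℓ j - a ℓ j)) / 2) ≤ ∑ j, max (a ℓ j) (U - b ℓ j) := by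
        apply Finset.sum_le_sum
        intro j _
        have := half_le_max (a ℓ j) (U - b ℓ j)
        linarith
      have step2 : (∑ j, (U - (b ℓ j - a ℓ j)) / 2)
          = (U * (m ℓ : ℝ) - ∑ j, (b ℓ j - a ℓ j)) / 2 := by
        rw [← Finset.sum_div, Finset.sum_sub_distrib, Finset.sum_const, Finset.card_univ,
          Fintype.card_fin, nsmul_eq_mul, mul_comm]
      have step3 : min S (U * (m ℓ : ℝ)) ≥ ∑ j, (b ℓ j - a ℓ j) := le_min (hSl ℓ) (hSv ℓ)
      linarith
    -- put everything together
    have keyS := key S hS0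
    have eT : (∑ ℓ, (U * (m ℓ : ℝ) - min T (U * (m ℓ : ℝ))) / 2)
        = ((∑ ℓ, U * (m ℓ : ℝ)) - ∑ ℓ, min T (U * (m ℓ : ℝ))) / 2 := by
      rw [← Finset.sum_div, Finset.sum_sub_distrib]
    have eS : (∑ ℓ, (U * (m ℓ : ℝ) - min S (U * (m ℓ : ℝ))) / 2)
        = ((∑ ℓ, U * (m ℓ : ℝ)) - ∑ ℓ, min S (U * (m ℓ : ℝ))) / 2 := by
      rw [← Finset.sum_div, Finset.sum_sub_distrib]
    have hsum_eq : (∑ ℓ, ∑ _j : Fin (m ℓ), max (max ((U * (m ℓ : ℝ) - T) / (2 * (m ℓ : ℝ))) 0)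
        (U - min ((U * (m ℓ : ℝ) + T) / (2 * (m ℓ : ℝ))) U))
        = ∑ ℓ, (U * (m ℓ : ℝ) - min T (U * (m ℓ : ℝ))) / 2 :=
      Finset.sum_congr rfl (fun ℓ _ => hin ℓ)
    have hAsum : (∑ ℓ, (U * (m ℓ : ℝ) - min S (U * (m ℓ : ℝ))) / 2)
        ≤ ∑ ℓ, ∑ j, max (a ℓ j) (U - b ℓ j) := Finset.sum_le_sum hA
    rw [hsum_eq, hsup1]
    have hfinal : (∑ ℓ, (U * (m ℓ : ℝ) - min T (U * (m ℓ : ℝ))) / 2) + (1/ε) * T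
        ≤ (∑ ℓ, (U * (m ℓ : ℝ) - min S (U * (m ℓ : ℝ))) / 2) + (1/ε) * S := by
      rw [eT, eS]
      have hε' : (2/ε) = 2 * (1/ε) := by ring
      rw [hε'] at keyS
      nlinarith [keyS]
    linarith
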